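/- If A ∈ T and w ∈ F, then A ≡ w if and only if every non-zero element of β(A) ∈ S has the form v* v w for some v ∈ F. -/

import Mathlib

open scoped Pointwise

/-- Generators of the branch monoid `B`: π₁, π₂, their stars, and 0. -/
inductive Bgen : Type
  | pi : Fin 2 → Bgen
  | pis : Fin 2 → Bgen
  | zero : Bgen

/-- Defining relations of the branch monoid: `0·b = b·0 = 0` and `πᵢπⱼ* = δᵢⱼ`. -/
inductive Brel : FreeMonoid Bgen → FreeMonoid Bgen → Prop
  | zero_mul (x : FreeMonoid Bgen) :
      Brel (FreeMonoid.of Bgen.zero * x) (FreeMonoid.of Bgen.zero)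
  | mul_zero (x : FreeMonoid Bgen) :
      Brel (x * FreeMonoid.of Bgen.zero) (FreeMonoid.of Bgen.zero)
  | pi_pis_same (i : Fin 2) :
      Brel (FreeMonoid.of (Bgen.pi i) * FreeMonoid.of (Bgen.pis i)) 1
  | pi_pis_ne (i j : Fin 2) : i ≠ j →
      Brel (FreeMonoid.of (Bgen.pi i) * FreeMonoid.of (Bgen.pis j))
        (FreeMonoid.of Bgen.zero)

/-- The congruence generated by the defining relations. -/
def Bcon : Con (FreeMonoid Bgen) := conGen Brel

/-- The branch monoid `B`. -/
abbrev Bmon : Type := Bcon.Quotient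

/-- The absorbing element `0` of `B`. -/
def bz : Bmon := Bcon.mk' (FreeMonoid.of Bgen.zero)

/-- The image of πᵢ in `B`. -/
def bpi (i : Fin 2) : Bmon := Bcon.mk' (FreeMonoid.of (Bgen.pi i))

/-- The image of πᵢ* in `B`. -/
def bpis (i : Fin 2) : Bmon := Bcon.mk' (FreeMonoid.of (Bgen.pis i))

/-- The inclusion of the free monoid `F` on π₁, π₂ into `B`. -/
def ιF : FreeMonoid (Fin 2) →* Bmon :=
  Bcon.mk'.comp (FreeMonoid.map Bgen.pi)

/-- The star `w*` of a word `w ∈ F`, as an element of `B`: reverse the word and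
star each letter. -/
def bstar (w : FreeMonoid (Fin 2)) : Bmon :=
  Bcon.mk' (FreeMonoid.ofList (((FreeMonoid.toList w).reverse).map Bgen.pis))

theorem bz_mul (x : Bmon) : bz * x = bz := by
  induction x using Con.induction_on with
  | H x => exact Con.eq Bcon |>.2 (ConGen.Rel.of _ _ (Brel.zero_mul x))

theorem mul_bz (x : Bmon) : x * bz = bz := by
  induction x using Con.induction_on with
  | H x => exact Con.eq Bcon |>.2 (ConGen.Rel.of _ _ (Brel.mul_zero x))

/-- The monoid `S` of subsets of `B` containing `0`, under elementwise
multiplication; the identity is `{0, 1}`. -/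
def Smon : Type := {X : Set Bmon // bz ∈ X}

noncomputable instance : Monoid Smon where
  mul X Y := ⟨X.val * Y.val, ⟨bz, X.prop, bz, Y.prop, bz_mul bz⟩⟩
  one := ⟨{bz, 1}, Or.inl rfl⟩
  mul_assoc X Y Z := Subtype.ext (mul_assoc X.val Y.val Z.val)
  one_mul X := Subtype.ext <| by
    show ({bz, 1} : Set Bmon) * X.val = X.val
    rw [Set.insert_eq, Set.union_mul, Set.singleton_mul, Set.singleton_mul]
    ext b
    constructor
    · rintro (⟨x, hx, rfl⟩ | ⟨x, hx, rfl⟩)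
      · simpa [bz_mul] using X.prop
      · simpa [one_mul] using hx
    · intro hb
      exact Or.inr ⟨b, hb, one_mul b⟩
  mul_one X := Subtype.ext <| by
    show X.val * ({bz, 1} : Set Bmon) = X.val
    rw [Set.insert_eq, Set.mul_union, Set.mul_singleton, Set.mul_singleton]
    ext b
    constructor
    · rintro (⟨x, hx, rfl⟩ | ⟨x, hx, rfl⟩)
      · simpa [mul_bz] using X.prop
      · simpa [mul_one] using hx
    · intro hb
      exact Or.inr ⟨b, hb, mul_one b⟩

theorem Smon_mul_val (X Y : Smon) : (X * Y).val = X.val * Y.val := rfl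

theorem Smon_one_val : (1 : Smon).val = {bz, 1} := rfl

/-- The element `{0, πᵢ}` of `S`. -/
def sπ (i : Fin 2) : Smon := ⟨{bz, bpi i}, Or.inl rfl⟩

/-- The element `{0, πᵢ*}` of `S`. -/
def sπs (i : Fin 2) : Smon := ⟨{bz, bpis i}, Or.inl rfl⟩

/-- The CQP operation on `S`: `Σ(X, Y) = π₁* X ∪ π₂* Y`. -/
def SgS (X Y : Smon) : Smon :=
  ⟨({bz, bpis 0} : Set Bmon) * X.val ∪ ({bz, bpis 1} : Set Bmon) * Y.val,
    Or.inl ⟨bz, Or.inl rfl, bz, X.prop, bz_mul bz⟩⟩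

/-- The free magma `T` on the free monoid `F` on π₁, π₂: finite nonempty ordered
binary trees with leaves colored by elements of `F`. -/
inductive Tm : Type
  | leaf : FreeMonoid (Fin 2) → Tm
  | node : Tm → Tm → Tm

/-- The action of the generator πᵢ on `T`: it picks out the `i`-th subtree of a
node, and acts by left multiplication on (the color of) a single leaf. -/
def pact (i : Fin 2) : Tm → Tm
  | .leaf w => .leaf (FreeMonoid.of i * w)
  | .node A B => if i = 0 then A else B

/-- The left action of a word `w ∈ F` on `T`, applying the symbols of `w` one at
a time from right to left. -/
def wact (w : FreeMonoid (Fin 2)) (A : Tm) : Tm :=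
  (FreeMonoid.toList w).foldr pact A

/-- The product on `T`: `A * B` replaces each leaf of `A` of color `w` by `w • B`. -/
def tmul : Tm → Tm → Tm
  | .leaf w, B => wact w B
  | .node A₁ A₂, B => .node (tmul A₁ B) (tmul A₂ B)

/-- The identity of `T`: a single leaf colored by the empty word. -/
def tone : Tm := .leaf 1

/-- The list of leaves of a tree `A ∈ T`, in order, recorded as pairs
`(path, color)`: the path from the root to the leaf is described by the word
`path` read from right to left, and `color` is the color of the leaf. -/
def tleaves : Tm → List (FreeMonoid (Fin 2) × FreeMonoid (Fin 2))
  | .leaf w => [(1, w)]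
  | .node A B =>
      ((tleaves A).map fun pc => (pc.1 * FreeMonoid.of 0, pc.2)) ++
        ((tleaves B).map fun pc => (pc.1 * FreeMonoid.of 1, pc.2))

/-- One expansion move on `T`: some leaf of color `w` is replaced by the
two-leaf tree with colors `π₁ w`, `π₂ w` in order. -/
inductive Exp : Tm → Tm → Prop
  | expand (w : FreeMonoid (Fin 2)) :
      Exp (.leaf w) (.node (.leaf (FreeMonoid.of 0 * w)) (.leaf (FreeMonoid.of 1 * w)))
  | left {A A' : Tm} (B : Tm) : Exp A A' → Exp (.node A B) (.node A' B)
  | right (A : Tm) {B B' : Tm} : Exp B B' → Exp (.node A B) (.node A B')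

/-- The equivalence relation `≡` on `T` generated by expansion moves. -/
def TEquiv : Tm → Tm → Prop := Relation.EqvGen Exp

/-- `A` is reduced if no retraction move applies to it, i.e. it is not the
result of an expansion move. -/
def TReduced (A : Tm) : Prop := ∀ B : Tm, ¬ Exp B A

/-- The branch homomorphism `β : T → S`: the magma homomorphism sending a leaf
of color `w` to `{0, w}`. -/
noncomputable def βmap : Tm → Smon
  | .leaf w => ⟨{bz, ιF w}, Or.inl rfl⟩
  | .node A B => SgS (βmap A) (βmap B)


/-! ### Auxiliary development -/

/-- Action of the generators on `Option (List (Fin 2))`. -/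
def genAct : Bgen → Function.End (Option (List (Fin 2)))
  | .pi i => fun x => x.bind fun l =>
      match l with
      | [] => none
      | j :: t => if j = i then some t else none
  | .pis i => fun x => x.map fun l => i :: l
  | .zero => fun _ => none

def evF : FreeMonoid Bgen →* Function.End (Option (List (Fin 2))) :=
  FreeMonoid.lift genAct

lemma evF_of_mul (a : Bgen) (m : FreeMonoid Bgen) (t : Option (List (Fin 2))) :
    evF (FreeMonoid.of a * m) t = genAct a (evF m t) := by
  rw [map_mul]; rfl

lemma genAct_none (a : Bgen) : genAct a none = none := by cases a <;> rfl

lemma evF_none (m : FreeMonoid Bgen) : evF m none = none := by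
  induction m using FreeMonoid.inductionOn' with
  | one => rfl
  | of_mul a m ih => rw [evF_of_mul, ih, genAct_none]

lemma evF_rel {x y : FreeMonoid Bgen} (h : Brel x y) : evF x = evF y := by
  cases h with
  | zero_mul x =>
    funext t
    rw [evF_of_mul]
    rfl
  | mul_zero x =>
    funext t
    have : evF (x * FreeMonoid.of Bgen.zero) t = evF x (evF (FreeMonoid.of Bgen.zero) t) := by
      rw [map_mul]; rfl
    rw [this]
    have h1 : evF (FreeMonoid.of Bgen.zero) t = none := by
      show genAct Bgen.zero t = none; rfl
    rw [h1, evF_none]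
  | pi_pis_same i =>
    funext t
    have h1 : evF (1 : FreeMonoid Bgen) t = t := rfl
    rw [evF_of_mul, h1]
    show genAct (Bgen.pi i) (genAct (Bgen.pis i) t) = t
    cases t with
    | none => rfl
    | some l => simp [genAct]
  | pi_pis_ne i j hij =>
    funext t
    have h1 : evF (FreeMonoid.of Bgen.zero) t = none := rfl
    rw [evF_of_mul, h1]
    show genAct (Bgen.pi i) (genAct (Bgen.pis j) t) = none
    cases t with
    | none => rfl
    | some l =>
      show (if j = i then some l else none) = none
      exact if_neg fun h => hij h.symm

noncomputable def ev : Bmon →* Function.End (Option (List (Fin 2))) :=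
  Bcon.lift evF (by
    refine Con.conGen_le.2 ?_
    intro x y h
    exact (Con.ker_rel _).2 (evF_rel h))

lemma ev_mk' (m : FreeMonoid Bgen) : ev (Bcon.mk' m) = evF m := rfl

/-- Word versions of `bstar` and `ιF`. -/
def starW (v : FreeMonoid (Fin 2)) : FreeMonoid Bgen :=
  FreeMonoid.ofList (((FreeMonoid.toList v).reverse).map Bgen.pis)

def piW (u : FreeMonoid (Fin 2)) : FreeMonoid Bgen := FreeMonoid.map Bgen.pi u

lemma bstar_eq (v) : bstar v = Bcon.mk' (starW v) := rfl

lemma iF_eq (u) : ιF u = Bcon.mk' (piW u) := rfl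

lemma piW_of_mul (a : Fin 2) (u : FreeMonoid (Fin 2)) :
    piW (FreeMonoid.of a * u) = FreeMonoid.of (Bgen.pi a) * piW u := by
  simp [piW]

lemma evF_piW (u : FreeMonoid (Fin 2)) (x : List (Fin 2)) :
    evF (piW u) (some ((FreeMonoid.toList u).reverse ++ x)) = some x := by
  induction u using FreeMonoid.inductionOn' generalizing x with
  | one => rfl
  | of_mul a u ih =>
    rw [piW_of_mul, evF_of_mul]
    have hl : (FreeMonoid.toList (FreeMonoid.of a * u)).reverse ++ x
        = (FreeMonoid.toList u).reverse ++ (a :: x) := by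
      simp [FreeMonoid.toList_of_mul]
    rw [hl, ih]
    simp [genAct]

lemma evF_piW_some (u : FreeMonoid (Fin 2)) (x y : List (Fin 2))
    (h : evF (piW u) (some x) = some y) : x = (FreeMonoid.toList u).reverse ++ y := by
  induction u using FreeMonoid.inductionOn' generalizing y with
  | one =>
    have h' : (some x : Option (List (Fin 2))) = some y := h
    simpa using Option.some.inj h'
  | of_mul a u ih =>
    rw [piW_of_mul, evF_of_mul] at h
    rcases hz : evF (piW u) (some x) with _ | z
    · rw [hz] at h; exact absurd h (by simp [genAct])
    · rw [hz] at h
      rcases z with _ | ⟨j, t⟩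
      · exact absurd h (by simp [genAct])
      · have hj : j = a ∧ t = y := by
          by_cases hja : j = a
          · refine ⟨hja, ?_⟩
            simp [genAct, hja] at h
            exact h
          · exact absurd h (by simp [genAct, hja])
        obtain ⟨rfl, rfl⟩ := hj
        have := ih _ hz
        simp [FreeMonoid.toList_of_mul, this]

lemma starW_mul_of (p : FreeMonoid (Fin 2)) (i : Fin 2) :
    starW (p * FreeMonoid.of i) = FreeMonoid.of (Bgen.pis i) * starW p := by
  simp [starW]

lemma evF_starW (v : FreeMonoid (Fin 2)) (x : List (Fin 2)) :
    evF (starW v) (some x) = some ((FreeMonoid.toList v).reverse ++ x) := by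
  induction v using FreeMonoid.inductionOn' generalizing x with
  | one => rfl
  | of_mul a v ih =>
    rw [show FreeMonoid.of a * v = (FreeMonoid.of a) * v from rfl]
    have : starW (FreeMonoid.of a * v)
        = starW v * FreeMonoid.of (Bgen.pis a) := by
      simp [starW, FreeMonoid.toList_of_mul]
    rw [this]
    have hm : evF (starW v * FreeMonoid.of (Bgen.pis a)) (some x)
        = evF (starW v) (evF (FreeMonoid.of (Bgen.pis a)) (some x)) := by
      rw [map_mul]; rfl
    rw [hm]
    have h1 : evF (FreeMonoid.of (Bgen.pis a)) (some x) = some (a :: x) := rfl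
    rw [h1, ih]
    simp [FreeMonoid.toList_of_mul]

lemma ev_bstar_iF (v c : FreeMonoid (Fin 2)) (x : List (Fin 2)) :
    ev (bstar v * ιF c) (some ((FreeMonoid.toList c).reverse ++ x))
      = some ((FreeMonoid.toList v).reverse ++ x) := by
  rw [bstar_eq, iF_eq, ← map_mul, ev_mk']
  have : evF (starW v * piW c) (some ((FreeMonoid.toList c).reverse ++ x))
      = evF (starW v) (evF (piW c) (some ((FreeMonoid.toList c).reverse ++ x))) := by
    rw [map_mul]; rfl
  rw [this, evF_piW, evF_starW]

lemma bstar_iF_ne_bz (v c : FreeMonoid (Fin 2)) : bstar v * ιF c ≠ bz := by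
  intro h
  have h2 := congrFun (congrArg (fun b => (ev b : Option (List (Fin 2)) → Option (List (Fin 2)))) h)
    (some ((FreeMonoid.toList c).reverse ++ []))
  rw [ev_bstar_iF] at h2
  have hz : ev bz (some ((FreeMonoid.toList c).reverse ++ [])) = none := rfl
  rw [hz] at h2
  exact Option.some_ne_none _ h2

lemma bstar_iF_inj {v c v' c' : FreeMonoid (Fin 2)}
    (h : bstar v * ιF c = bstar v' * ιF c') : v = v' ∧ c = c' := by
  have key : ∀ (a b a' b' : FreeMonoid (Fin 2)), bstar a * ιF b = bstar a' * ιF b' →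
      ∃ y : List (Fin 2), (FreeMonoid.toList b).reverse = (FreeMonoid.toList b').reverse ++ y ∧
        (FreeMonoid.toList a).reverse = (FreeMonoid.toList a').reverse ++ y := by
    intro a b a' b' hab
    have h1 := congrFun (congrArg
      (fun z => (ev z : Option (List (Fin 2)) → Option (List (Fin 2)))) hab)
      (some ((FreeMonoid.toList b).reverse ++ []))
    rw [ev_bstar_iF] at h1
    -- h1 : some (rev a ++ []) = ev (bstar a' * ιF b') (some (rev b ++ []))
    rw [bstar_eq, iF_eq, ← map_mul, ev_mk'] at h1
    have hsplit : evF (starW a' * piW b') (some ((FreeMonoid.toList b).reverse ++ []))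
        = evF (starW a') (evF (piW b') (some ((FreeMonoid.toList b).reverse ++ []))) := by
      rw [map_mul]; rfl
    rw [hsplit] at h1
    rcases hz : evF (piW b') (some ((FreeMonoid.toList b).reverse ++ [])) with _ | y
    · rw [hz, evF_none] at h1; exact absurd h1 (Option.some_ne_none _)
    · rw [hz, evF_starW] at h1
      refine ⟨y, ?_, ?_⟩
      · have := evF_piW_some _ _ _ hz
        simpa using this
      · have := h1
        simp only [List.append_nil] at this
        exact Option.some.inj this
  obtain ⟨y, hy1, hy2⟩ := key v c v' c' h
  obtain ⟨y', hy1', _⟩ := key v' c' v c h.symm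
  have hlen : y = [] := by
    have l1 := congrArg List.length hy1
    have l2 := congrArg List.length hy1'
    simp only [List.length_append] at l1 l2
    have : y.length = 0 := by omega
    exact List.eq_nil_of_length_eq_zero this
  subst hlen
  simp only [List.append_nil] at hy1 hy2
  constructor
  · exact FreeMonoid.toList.injective (List.reverse_injective hy2)
  · exact FreeMonoid.toList.injective (List.reverse_injective hy1)

lemma bstar_one : bstar (1 : FreeMonoid (Fin 2)) = 1 := by
  rw [bstar_eq]
  exact map_one _

lemma bstar_mul_of (p : FreeMonoid (Fin 2)) (i : Fin 2) :
    bstar (p * FreeMonoid.of i) = bpis i * bstar p := by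
  rw [bstar_eq, bstar_eq, starW_mul_of, map_mul]
  rfl

/-- The set of non-zero "leaf values" of a tree. -/
def leafSet (A : Tm) : Set Bmon :=
  {b | ∃ pc ∈ tleaves A, b = bstar pc.1 * ιF pc.2}

lemma βmap_val (A : Tm) : (βmap A).val = insert bz (leafSet A) := by
  induction A with
  | leaf u =>
    show ({bz, ιF u} : Set Bmon) = _
    ext b
    simp only [Set.mem_insert_iff, Set.mem_singleton_iff, leafSet, tleaves, Set.mem_setOf_eq,
      List.mem_singleton]
    constructor
    · rintro (rfl | rfl)
      · exact Or.inl rfl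
      · exact Or.inr ⟨(1, u), rfl, by rw [bstar_one, one_mul]⟩
    · rintro (rfl | ⟨pc, rfl, rfl⟩)
      · exact Or.inl rfl
      · exact Or.inr (by rw [bstar_one, one_mul])
  | node A B ihA ihB =>
    show (({bz, bpis 0} : Set Bmon) * (βmap A).val ∪ ({bz, bpis 1} : Set Bmon) * (βmap B).val) = _
    rw [ihA, ihB]
    ext b
    simp only [Set.mem_union, Set.mem_mul, Set.mem_insert_iff, Set.mem_singleton_iff,
      leafSet, Set.mem_setOf_eq, tleaves, List.mem_append, List.mem_map]
    constructor
    · rintro (⟨x, hx, y, hy, rfl⟩ | ⟨x, hx, y, hy, rfl⟩)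
      · rcases hx with rfl | rfl
        · exact Or.inl (bz_mul y)
        rcases hy with rfl | ⟨pc, hpc, rfl⟩
        · exact Or.inl (mul_bz _)
        · refine Or.inr ⟨(pc.1 * FreeMonoid.of 0, pc.2), Or.inl ⟨pc, hpc, rfl⟩, ?_⟩
          rw [bstar_mul_of, mul_assoc]
      · rcases hx with rfl | rfl
        · exact Or.inl (bz_mul y)
        rcases hy with rfl | ⟨pc, hpc, rfl⟩
        · exact Or.inl (mul_bz _)
        · refine Or.inr ⟨(pc.1 * FreeMonoid.of 1, pc.2), Or.inr ⟨pc, hpc, rfl⟩, ?_⟩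
          rw [bstar_mul_of, mul_assoc]
    · rintro (rfl | ⟨pc, (⟨qc, hqc, rfl⟩ | ⟨qc, hqc, rfl⟩), rfl⟩)
      · exact Or.inl ⟨bz, Or.inl rfl, bz, Or.inl rfl, bz_mul bz⟩
      · refine Or.inl ⟨bpis 0, Or.inr rfl, bstar qc.1 * ιF qc.2, Or.inr ⟨qc, hqc, rfl⟩, ?_⟩
        rw [bstar_mul_of, mul_assoc]
      · refine Or.inr ⟨bpis 1, Or.inr rfl, bstar qc.1 * ιF qc.2, Or.inr ⟨qc, hqc, rfl⟩, ?_⟩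
        rw [bstar_mul_of, mul_assoc]

/-- The combinatorial condition: every leaf color equals its path times `w`. -/
def Qcond (A : Tm) (w : FreeMonoid (Fin 2)) : Prop :=
  ∀ pc ∈ tleaves A, pc.2 = pc.1 * w

lemma Qcond_leaf (u w : FreeMonoid (Fin 2)) : Qcond (.leaf u) w ↔ u = w := by
  constructor
  · intro h
    have := h (1, u) (by simp [tleaves])
    simpa using this
  · rintro rfl pc hpc
    simp only [tleaves, List.mem_singleton] at hpc
    subst hpc
    exact (one_mul _).symm

lemma Qcond_node (A B : Tm) (w : FreeMonoid (Fin 2)) :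
    Qcond (.node A B) w ↔ Qcond A (FreeMonoid.of 0 * w) ∧ Qcond B (FreeMonoid.of 1 * w) := by
  constructor
  · intro h
    constructor
    · intro pc hpc
      have := h (pc.1 * FreeMonoid.of 0, pc.2)
        (by simp only [tleaves, List.mem_append, List.mem_map]; exact Or.inl ⟨pc, hpc, rfl⟩)
      simpa [mul_assoc] using this
    · intro pc hpc
      have := h (pc.1 * FreeMonoid.of 1, pc.2)
        (by simp only [tleaves, List.mem_append, List.mem_map]; exact Or.inr ⟨pc, hpc, rfl⟩)
      simpa [mul_assoc] using this
  · rintro ⟨hA, hB⟩ pc hpc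
    simp only [tleaves, List.mem_append, List.mem_map] at hpc
    rcases hpc with ⟨qc, hqc, rfl⟩ | ⟨qc, hqc, rfl⟩
    · have := hA qc hqc
      simp only at this ⊢
      rw [this, mul_assoc]
    · have := hB qc hqc
      simp only at this ⊢
      rw [this, mul_assoc]

lemma exp_Qcond {A B : Tm} (h : Exp A B) (w : FreeMonoid (Fin 2)) :
    Qcond A w ↔ Qcond B w := by
  induction h generalizing w with
  | expand u =>
    rw [Qcond_leaf, Qcond_node, Qcond_leaf, Qcond_leaf]
    constructor
    · rintro rfl; exact ⟨rfl, rfl⟩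
    · rintro ⟨h1, _⟩
      exact mul_left_cancel h1
  | left B hA ih =>
    rw [Qcond_node, Qcond_node, ih]
  | right A hB ih =>
    rw [Qcond_node, Qcond_node, ih]

lemma tequiv_Qcond {A B : Tm} (h : TEquiv A B) (w : FreeMonoid (Fin 2)) :
    Qcond A w ↔ Qcond B w := by
  induction h with
  | rel _ _ hr => exact exp_Qcond hr w
  | refl => exact Iff.rfl
  | symm _ _ _ ih => exact ih.symm
  | trans _ _ _ _ _ ih1 ih2 => exact ih1.trans ih2

lemma tequiv_node_left {A A' : Tm} (B : Tm) (h : TEquiv A A') :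
    TEquiv (.node A B) (.node A' B) := by
  induction h with
  | rel _ _ hr => exact Relation.EqvGen.rel _ _ (Exp.left B hr)
  | refl => exact Relation.EqvGen.refl _
  | symm _ _ _ ih => exact Relation.EqvGen.symm _ _ ih
  | trans _ _ _ _ _ ih1 ih2 => exact Relation.EqvGen.trans _ _ _ ih1 ih2

lemma tequiv_node_right (A : Tm) {B B' : Tm} (h : TEquiv B B') :
    TEquiv (.node A B) (.node A B') := by
  induction h with
  | rel _ _ hr => exact Relation.EqvGen.rel _ _ (Exp.right A hr)
  | refl => exact Relation.EqvGen.refl _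
  | symm _ _ _ ih => exact Relation.EqvGen.symm _ _ ih
  | trans _ _ _ _ _ ih1 ih2 => exact Relation.EqvGen.trans _ _ _ ih1 ih2

lemma Qcond_tequiv : ∀ (A : Tm) (w : FreeMonoid (Fin 2)), Qcond A w → TEquiv A (.leaf w) := by
  intro A
  induction A with
  | leaf u =>
    intro w h
    rw [Qcond_leaf] at h
    subst h
    exact Relation.EqvGen.refl _
  | node A B ihA ihB =>
    intro w h
    rw [Qcond_node] at h
    have h1 := ihA _ h.1
    have h2 := ihB _ h.2
    have step : TEquiv (Tm.node A B)
        (Tm.node (.leaf (FreeMonoid.of 0 * w)) (.leaf (FreeMonoid.of 1 * w))) :=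
      Relation.EqvGen.trans _ _ _ (tequiv_node_left B h1) (tequiv_node_right _ h2)
    exact Relation.EqvGen.trans _ _ _ step
      (Relation.EqvGen.symm _ _ (Relation.EqvGen.rel _ _ (Exp.expand w)))

/-- For `A ∈ T` and `w ∈ F`, `A ≡ w` iff every non-zero element of `β(A)` has
the form `v* v w` for some `v ∈ F`. -/
theorem tequiv_leaf_iff_branches (A : Tm) (w : FreeMonoid (Fin 2)) :
    TEquiv A (.leaf w) ↔
      ∀ b ∈ (βmap A).val, b ≠ bz →
        ∃ v : FreeMonoid (Fin 2), b = bstar v * ιF (v * w) := by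
  constructor
  · intro h b hb hbz
    have hQ : Qcond A w := (tequiv_Qcond h w).mpr ((Qcond_leaf w w).mpr rfl)
    rw [βmap_val] at hb
    rcases hb with rfl | ⟨pc, hpc, rfl⟩
    · exact absurd rfl hbz
    · exact ⟨pc.1, by rw [hQ pc hpc]⟩
  · intro h
    apply Qcond_tequiv
    intro pc hpc
    have hb : bstar pc.1 * ιF pc.2 ∈ (βmap A).val := by
      rw [βmap_val]
      exact Set.mem_insert_iff.mpr (Or.inr ⟨pc, hpc, rfl⟩)
    obtain ⟨v, hv⟩ := h _ hb (bstar_iF_ne_bz _ _)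
    obtain ⟨h1, h2⟩ := bstar_iF_inj hv
    rw [h2, h1]
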